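/- Let C be a convex subset of a Euclidean space X that is a τ-enlargement (i.e., C = D + B(0,τ) for a nonempty closed set D) with τ > 0, let x ∉ C, and let p = P_C x. Then there exists q ∈ D such that ‖x - q‖ = ‖x - p‖ + ‖p - q‖ = d_C(x) + τ; in particular ‖p - q‖ = τ and p lies on the segment [x, q]. -/

import Mathlib

open Metric Set Pointwise

/-- The metric projection of `x` onto `C`, as a set. -/
noncomputable def projSet {X : Type*} [NormedAddCommGroup X]
    (C : Set X) (x : X) : Set X :=
  {p | p ∈ C ∧ dist x p = Metric.infDist x C}

/-- for a convex `τ`-enlargement `C = D + B(0,τ)`, the projection of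
an exterior point aligns with a point `q ∈ D` at distance `τ` beyond `p`. -/
theorem enlargement_projection_alignment
    {X : Type*} [NormedAddCommGroup X] [InnerProductSpace ℝ X] [FiniteDimensional ℝ X]
    (D : Set X) (hDne : D.Nonempty) (hDcl : IsClosed D) (τ : ℝ) (hτ : 0 < τ)
    (C : Set X) (hC : C = D + closedBall 0 τ) (hconv : Convex ℝ C)
    (x : X) (hx : x ∉ C) (p : X) (hp : p ∈ projSet C x) :
    ∃ q ∈ D, ‖x - q‖ = ‖x - p‖ + ‖p - q‖ ∧
      ‖x - q‖ = Metric.infDist x C + τ ∧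
      ‖p - q‖ = τ ∧ p ∈ segment ℝ x q := by
  obtain ⟨hpC, hpdist⟩ := hp
  obtain ⟨q, hqD, hq⟩ := hDcl.exists_infDist_eq_dist hDne x
  set δ := Metric.infDist x D with hδdef
  have hxq : dist x q = δ := hq.symm
  have hτδ : τ < δ := by
    by_contra h
    push_neg at h
    apply hx
    rw [hC]
    refine Set.mem_add.mpr ⟨q, hqD, x - q, ?_, by abel⟩
    rw [mem_closedBall_zero_iff]
    calc ‖x - q‖ = dist x q := (dist_eq_norm x q).symm
      _ = δ := hxq
      _ ≤ τ := h
  have hδ0 : 0 < δ := hτ.trans hτδ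
  have hδne : δ ≠ 0 := ne_of_gt hδ0
  set p' : X := q + (τ / δ) • (x - q) with hp'def
  have hnormxq : ‖x - q‖ = δ := by rw [← dist_eq_norm]; exact hxq
  have hp'C : p' ∈ C := by
    rw [hC]
    refine Set.mem_add.mpr ⟨q, hqD, (τ / δ) • (x - q), ?_, rfl⟩
    rw [mem_closedBall_zero_iff, norm_smul, hnormxq, Real.norm_eq_abs,
      abs_of_nonneg (by positivity)]
    field_simp
    norm_num
  have hratio : (1 : ℝ) - τ / δ ≥ 0 := by
    rw [ge_iff_le, sub_nonneg]; exact (div_le_one hδ0).mpr hτδ.le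
  have hxp' : dist x p' = δ - τ := by
    have h1 : x - p' = (1 - τ / δ) • (x - q) := by rw [hp'def]; module
    rw [dist_eq_norm, h1, norm_smul, hnormxq, Real.norm_eq_abs, abs_of_nonneg hratio]
    field_simp
  have hinf : Metric.infDist x C = δ - τ := by
    apply le_antisymm
    · calc Metric.infDist x C ≤ dist x p' := Metric.infDist_le_dist_of_mem hp'C
        _ = δ - τ := hxp'
    · have hCne : C.Nonempty := ⟨p', hp'C⟩
      by_contra hlt
      push_neg at hlt
      obtain ⟨y, hy, hylt⟩ := (Metric.infDist_lt_iff hCne).mp hlt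
      rw [hC] at hy
      obtain ⟨d, hdD, b, hb, rfl⟩ : ∃ d ∈ D, ∃ b ∈ closedBall (0:X) τ, d + b = y := Set.mem_add.mp hy
      rw [mem_closedBall_zero_iff] at hb
      have hxd : δ ≤ dist x d := Metric.infDist_le_dist_of_mem hdD
      have hdb : dist (d + b) d = ‖b‖ := by rw [dist_eq_norm]; simp
      have htri := dist_triangle x (d + b) d
      linarith
  -- uniqueness of projection onto convex set: p = p'
  have hpp' : p = p' := by
    have hm : ((1:ℝ)/2) • p + ((1:ℝ)/2) • p' ∈ C :=
      hconv hpC hp'C (by norm_num) (by norm_num) (by norm_num)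
    have hmd : δ - τ ≤ dist x (((1:ℝ)/2) • p + ((1:ℝ)/2) • p') := by
      rw [← hinf]; exact Metric.infDist_le_dist_of_mem hm
    have hpar : ‖(x - p) + (x - p')‖^2 + ‖(x - p) - (x - p')‖^2
        = 2 * (‖x - p‖^2 + ‖x - p'‖^2) := by
      have := parallelogram_law_with_norm ℝ (x - p) (x - p')
      linarith [this]
    have hs : (x - p) + (x - p') = (2:ℝ) • (x - (((1:ℝ)/2) • p + ((1:ℝ)/2) • p')) := by
      module
    have hns : ‖(x - p) + (x - p')‖ = 2 * dist x (((1:ℝ)/2) • p + ((1:ℝ)/2) • p') := by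
      rw [hs, norm_smul, dist_eq_norm]
      norm_num
    have hnp : ‖x - p‖ = δ - τ := by rw [← dist_eq_norm, hpdist, hinf]
    have hnp' : ‖x - p'‖ = δ - τ := by rw [← dist_eq_norm, hxp']
    have hdiff : ‖(x - p) - (x - p')‖ = ‖p' - p‖ := by
      congr 1; abel
    rw [hdiff, hnp, hnp'] at hpar
    have hle : ‖p' - p‖^2 ≤ 0 := by
      have h2 : 2 * (δ - τ) ≤ ‖(x - p) + (x - p')‖ := by
        rw [hns]; linarith
      have h0 : 0 ≤ 2 * (δ - τ) := by linarith
      nlinarith [mul_le_mul h2 h2 h0 (norm_nonneg ((x - p) + (x - p')))]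
    have : ‖p' - p‖ = 0 := le_antisymm (by nlinarith [norm_nonneg (p' - p)]) (norm_nonneg _)
    have := norm_sub_eq_zero_iff.mp this
    exact this.symm
  refine ⟨q, hqD, ?_, ?_, ?_, ?_⟩
  · have hpq : ‖p - q‖ = τ := by
      rw [hpp', hp'def]
      have : q + (τ/δ) • (x - q) - q = (τ/δ) • (x - q) := by abel
      rw [this, norm_smul, hnormxq, Real.norm_eq_abs, abs_of_nonneg (by positivity)]
      field_simp
    have hnp : ‖x - p‖ = δ - τ := by rw [← dist_eq_norm, hpdist, hinf]
    rw [hnormxq, hnp, hpq]; ring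
  · rw [hnormxq, hinf]; ring
  · rw [hpp', hp'def]
    have : q + (τ/δ) • (x - q) - q = (τ/δ) • (x - q) := by abel
    rw [this, norm_smul, hnormxq, Real.norm_eq_abs, abs_of_nonneg (by positivity)]
    field_simp
  · refine ⟨τ/δ, 1 - τ/δ, by positivity, hratio, by ring, ?_⟩
    rw [hpp', hp'def]
    module
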